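/- arXiv:2202.04805 — 4 statements merged into one kernel-verified Lean document; each statement's English description precedes it below -/
import Mathlib

section
/- Let M be a 3×3 real symmetric matrix with diagonal entries 1 that lies in the convex hull of matrices of the form (vᵢvⱼ)ᵢⱼ with v ∈ {-1,1}³. Then the off-diagonal entries M₀₁, M₀₂, M₁₂ cannot all equal -1/2. -/
theorem stmt_2 (M : Matrix (Fin 3) (Fin 3) ℝ)
    (hsym : M.IsSymm) (hdiag : ∀ i, M i i = 1)
    (hconv : ∃ (n : ℕ) (c : Fin n → ℝ) (v : Fin n → Fin 3 → ℝ),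
      (∀ t, 0 ≤ c t) ∧ (∑ t, c t = 1) ∧
      (∀ t i, v t i = 1 ∨ v t i = -1) ∧
      (∀ i j, M i j = ∑ t, c t * (v t i * v t j))) :
    ¬ (M 0 1 = -1/2 ∧ M 0 2 = -1/2 ∧ M 1 2 = -1/2) := by
  rintro ⟨h01, h02, h12⟩
  obtain ⟨n, c, v, hc, hcsum, hv, hM⟩ := hconv
  have key : (-3/2 : ℝ) ≥ -1 := by
    calc (-3/2 : ℝ) = M 0 1 + M 0 2 + M 1 2 := by rw [h01, h02, h12]; ring
    _ = ∑ t, c t * (v t 0 * v t 1 + v t 0 * v t 2 + v t 1 * v t 2) := by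
        rw [hM 0 1, hM 0 2, hM 1 2, ← Finset.sum_add_distrib, ← Finset.sum_add_distrib]
        apply Finset.sum_congr rfl; intro t _; ring
    _ ≥ ∑ t, c t * (-1) := by
        apply Finset.sum_le_sum
        intro t _
        apply mul_le_mul_of_nonneg_left _ (hc t)
        have h0 := hv t 0; have h1 := hv t 1; have h2 := hv t 2
        rcases h0 with h0 | h0 <;> rcases h1 with h1 | h1 <;> rcases h2 with h2 | h2 <;>
          rw [h0, h1, h2] <;> norm_num
    _ = -1 := by simp [mul_neg_one, Finset.sum_neg_distrib, hcsum]
  linarith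
end

section
/- If x, y, z ∈ [-1,1] and M is the 3×3 matrix with diagonal 1 and off-diagonal entries M₀₁ = xy, M₀₂ = xz, M₁₂ = yz, then the Frobenius distance from M to the matrix with diagonal 1 and all off-diagonal entries equal to -1/3 is at least √2/3. -/
theorem stmt_3 (x y z : ℝ)
    (hx : x ∈ Set.Icc (-1 : ℝ) 1) (hy : y ∈ Set.Icc (-1 : ℝ) 1)
    (hz : z ∈ Set.Icc (-1 : ℝ) 1) :
    Real.sqrt (∑ i : Fin 3, ∑ j : Fin 3,
        ((!![1, x*y, x*z; x*y, 1, y*z; x*z, y*z, 1] : Matrix (Fin 3) (Fin 3) ℝ) i j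
          - (!![1, -1/3, -1/3; -1/3, 1, -1/3; -1/3, -1/3, 1] : Matrix (Fin 3) (Fin 3) ℝ) i j) ^ 2)
      ≥ Real.sqrt 2 / 3 := by
  have key : (2:ℝ)/9 ≤ ∑ i : Fin 3, ∑ j : Fin 3,
        ((!![1, x*y, x*z; x*y, 1, y*z; x*z, y*z, 1] : Matrix (Fin 3) (Fin 3) ℝ) i j
          - (!![1, -1/3, -1/3; -1/3, 1, -1/3; -1/3, -1/3, 1] : Matrix (Fin 3) (Fin 3) ℝ) i j) ^ 2 := by
    simp only [Fin.sum_univ_three]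
    simp [Matrix.vecHead, Matrix.vecTail]
    have habc : (0:ℝ) ≤ (x*y) * ((x*z) * (y*z)) := by nlinarith [sq_nonneg (x*y*z)]
    rcases le_or_gt 0 (x*y) with h | h
    · nlinarith [sq_nonneg (x*z + 1/3), sq_nonneg (y*z + 1/3), sq_nonneg (x*y + 1/3), sq_nonneg (x*y - 1/3)]
    rcases le_or_gt 0 (x*z) with h2 | h2
    · nlinarith [sq_nonneg (x*y + 1/3), sq_nonneg (y*z + 1/3), sq_nonneg (x*z - 1/3)]
    have hp : (0:ℝ) < (x*y) * (x*z) := mul_pos_of_neg_of_neg h h2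
    have h3 : (0:ℝ) ≤ y*z := by nlinarith
    nlinarith [sq_nonneg (x*y + 1/3), sq_nonneg (x*z + 1/3), sq_nonneg (y*z - 1/3)]
  have h9 : Real.sqrt 9 = 3 := by
    rw [show (9:ℝ) = 3^2 by norm_num, Real.sqrt_sq (by norm_num : (0:ℝ) ≤ 3)]
  calc Real.sqrt 2 / 3 = Real.sqrt (2/9) := by
        rw [Real.sqrt_div (by norm_num : (0:ℝ) ≤ 2), h9]
    _ ≤ _ := Real.sqrt_le_sqrt key
end

section
/- Let X and Y be jointly Gaussian real random variables, each with mean 0 and variance 1, and correlation ρ = E[XY]. Then E[sgn(X)·sgn(Y)] = (2/π)·arcsin(ρ). -/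
open MeasureTheory ProbabilityTheory Set Filter Real
open scoped Real Topology ENNReal NNReal

lemma my_measurable_sign : Measurable Real.sign := by
  have h : Real.sign = fun r : ℝ => if r < 0 then (-1:ℝ) else if 0 < r then 1 else 0 := rfl
  rw [h]
  exact Measurable.ite measurableSet_Iio measurable_const
    (Measurable.ite measurableSet_Ioi measurable_const measurable_const)

lemma my_abs_sign_le (x : ℝ) : |Real.sign x| ≤ 1 := by
  rcases Real.sign_apply_eq x with h | h | h <;> rw [h] <;> norm_num

lemma my_sign_mul_pos {r : ℝ} (hr : 0 < r) (x : ℝ) : Real.sign (r * x) = Real.sign x := by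
  rcases lt_trichotomy x 0 with h | rfl | h
  · rw [Real.sign_of_neg h, Real.sign_of_neg (mul_neg_of_pos_of_neg hr h)]
  · simp
  · rw [Real.sign_of_pos h, Real.sign_of_pos (mul_pos hr h)]

lemma my_intervalIntegrable {f : ℝ → ℝ} (hf : Measurable f) (h : ∀ x, |f x| ≤ 1) (c d : ℝ) :
    IntervalIntegrable f volume c d := by
  rw [intervalIntegrable_iff]
  refine Integrable.mono' (g := fun _ => (1:ℝ)) ?_ hf.aestronglyMeasurable.restrict
    (Filter.Eventually.of_forall fun x => by simpa [Real.norm_eq_abs] using h x)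
  exact integrableOn_const measure_Ioc_lt_top.ne

lemma my_integral_const_Ioo {f : ℝ → ℝ} {a b c : ℝ} (hab : a ≤ b)
    (hf : ∀ x ∈ Set.Ioo a b, f x = c) : ∫ x in a..b, f x = c * (b - a) := by
  rw [intervalIntegral.integral_of_le hab, MeasureTheory.integral_Ioc_eq_integral_Ioo,
    setIntegral_congr_fun measurableSet_Ioo hf]
  simp [Real.volume_Ioo, ENNReal.toReal_ofReal (sub_nonneg.2 hab), mul_comm, hab]

lemma my_radial : ∫ r in Set.Ioi (0:ℝ), r * Real.exp (-(1/2) * r ^ 2) = 1 := by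
  have A : ∀ x : ℝ, HasDerivAt (fun y : ℝ => -Real.exp (-(1/2) * y ^ 2))
      (x * Real.exp (-(1/2) * x ^ 2)) x := by
    intro x
    refine (((hasDerivAt_pow 2 x).const_mul (-(1/2 : ℝ))).exp).neg.congr_deriv ?_
    simp
    ring
  have B : Filter.Tendsto (fun y : ℝ => -Real.exp (-(1/2) * y ^ 2)) atTop (nhds 0) := by
    rw [show (0:ℝ) = -0 by norm_num]
    refine Filter.Tendsto.neg ?_
    refine Real.tendsto_exp_atBot.comp ?_
    exact (tendsto_pow_atTop two_ne_zero).const_mul_atTop_of_neg (by norm_num)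
  have := integral_Ioi_of_hasDerivAt_of_tendsto' (a := 0)
    (fun x _ => A x) (integrable_mul_exp_neg_mul_sq (by norm_num : (0:ℝ) < 1/2)).integrableOn B
  simpa using this

noncomputable def G (θ : ℝ) : ℝ :=
  ∫ φ in (0:ℝ)..(2*π), Real.sign (Real.cos φ) * Real.sign (Real.cos (φ - θ))

lemma g_meas (θ : ℝ) :
    Measurable (fun φ => Real.sign (Real.cos φ) * Real.sign (Real.cos (φ - θ))) :=
  (my_measurable_sign.comp Real.measurable_cos).mul
    (my_measurable_sign.comp (Real.measurable_cos.comp (measurable_id.sub_const θ)))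

lemma g_bd (θ φ : ℝ) : |Real.sign (Real.cos φ) * Real.sign (Real.cos (φ - θ))| ≤ 1 := by
  rw [abs_mul]
  calc |Real.sign (Real.cos φ)| * |Real.sign (Real.cos (φ - θ))| ≤ 1 * 1 :=
        mul_le_mul (my_abs_sign_le _) (my_abs_sign_le _) (abs_nonneg _) zero_le_one
    _ = 1 := mul_one 1

lemma g_per (θ : ℝ) :
    Function.Periodic (fun φ => Real.sign (Real.cos φ) * Real.sign (Real.cos (φ - θ))) (2*π) := by
  intro x
  simp only
  rw [Real.cos_add_two_pi, show x + 2*π - θ = (x - θ) + 2*π by ring, Real.cos_add_two_pi]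

lemma keyG0 {θ : ℝ} (h1 : 0 ≤ θ) (h2 : θ ≤ π) : G θ = 2*π - 4*θ := by
  have hπ := Real.pi_pos
  have hInt : ∀ c d : ℝ,
      IntervalIntegrable (fun φ => Real.sign (Real.cos φ) * Real.sign (Real.cos (φ - θ)))
        volume c d := my_intervalIntegrable (g_meas θ) (g_bd θ)
  have hshift := (g_per θ).intervalIntegral_add_eq 0 (-(π/2))
  rw [zero_add] at hshift
  rw [G, hshift,
    ← intervalIntegral.integral_add_adjacent_intervals (hInt (-(π/2)) (θ - π/2))
      (hInt (θ - π/2) (-(π/2) + 2*π)),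
    ← intervalIntegral.integral_add_adjacent_intervals (hInt (θ - π/2) (π/2))
      (hInt (π/2) (-(π/2) + 2*π)),
    ← intervalIntegral.integral_add_adjacent_intervals (hInt (π/2) (θ + π/2))
      (hInt (θ + π/2) (-(π/2) + 2*π))]
  have e1 : (∫ φ in (-(π/2))..(θ - π/2),
      Real.sign (Real.cos φ) * Real.sign (Real.cos (φ - θ))) = (-1) * (θ - π/2 - (-(π/2))) := by
    refine my_integral_const_Ioo (by linarith) fun x hx => ?_
    have hc1 : 0 < Real.cos x := Real.cos_pos_of_mem_Ioo ⟨hx.1, by linarith [hx.2]⟩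
    have hc2 : Real.cos (x - θ) < 0 := by
      rw [← Real.cos_neg, neg_sub]
      exact Real.cos_neg_of_pi_div_two_lt_of_lt (by linarith [hx.2]) (by linarith [hx.1])
    simp [Real.sign_of_pos hc1, Real.sign_of_neg hc2]
  have e2 : (∫ φ in (θ - π/2)..(π/2),
      Real.sign (Real.cos φ) * Real.sign (Real.cos (φ - θ))) = 1 * (π/2 - (θ - π/2)) := by
    refine my_integral_const_Ioo (by linarith) fun x hx => ?_
    have hc1 : 0 < Real.cos x := Real.cos_pos_of_mem_Ioo ⟨by linarith [hx.1], hx.2⟩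
    have hc2 : 0 < Real.cos (x - θ) :=
      Real.cos_pos_of_mem_Ioo ⟨by linarith [hx.1], by linarith [hx.2]⟩
    simp [Real.sign_of_pos hc1, Real.sign_of_pos hc2]
  have e3 : (∫ φ in (π/2)..(θ + π/2),
      Real.sign (Real.cos φ) * Real.sign (Real.cos (φ - θ))) = (-1) * (θ + π/2 - π/2) := by
    refine my_integral_const_Ioo (by linarith) fun x hx => ?_
    have hc1 : Real.cos x < 0 :=
      Real.cos_neg_of_pi_div_two_lt_of_lt hx.1 (by linarith [hx.2])
    have hc2 : 0 < Real.cos (x - θ) :=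
      Real.cos_pos_of_mem_Ioo ⟨by linarith [hx.1], by linarith [hx.2]⟩
    simp [Real.sign_of_neg hc1, Real.sign_of_pos hc2]
  have e4 : (∫ φ in (θ + π/2)..(-(π/2) + 2*π),
      Real.sign (Real.cos φ) * Real.sign (Real.cos (φ - θ))) = 1 * (-(π/2) + 2*π - (θ + π/2)) := by
    refine my_integral_const_Ioo (by linarith) fun x hx => ?_
    have hc1 : Real.cos x < 0 :=
      Real.cos_neg_of_pi_div_two_lt_of_lt (by linarith [hx.1]) (by linarith [hx.2])
    have hc2 : Real.cos (x - θ) < 0 :=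
      Real.cos_neg_of_pi_div_two_lt_of_lt (by linarith [hx.1]) (by linarith [hx.2])
    simp [Real.sign_of_neg hc1, Real.sign_of_neg hc2]
  rw [e1, e2, e3, e4]; ring

lemma keyG0neg {θ : ℝ} (h1 : -π ≤ θ) (h2 : θ ≤ 0) : G θ = 2*π + 4*θ := by
  have hπ := Real.pi_pos
  have hInt : ∀ c d : ℝ,
      IntervalIntegrable (fun φ => Real.sign (Real.cos φ) * Real.sign (Real.cos (φ - θ)))
        volume c d := my_intervalIntegrable (g_meas θ) (g_bd θ)
  have hshift := (g_per θ).intervalIntegral_add_eq 0 (-(π/2))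
  rw [zero_add] at hshift
  rw [G, hshift,
    ← intervalIntegral.integral_add_adjacent_intervals (hInt (-(π/2)) (θ + π/2))
      (hInt (θ + π/2) (-(π/2) + 2*π)),
    ← intervalIntegral.integral_add_adjacent_intervals (hInt (θ + π/2) (π/2))
      (hInt (π/2) (-(π/2) + 2*π)),
    ← intervalIntegral.integral_add_adjacent_intervals (hInt (π/2) (θ + 3*π/2))
      (hInt (θ + 3*π/2) (-(π/2) + 2*π))]
  have e1 : (∫ φ in (-(π/2))..(θ + π/2),
      Real.sign (Real.cos φ) * Real.sign (Real.cos (φ - θ))) = 1 * (θ + π/2 - (-(π/2))) := by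
    refine my_integral_const_Ioo (by linarith) fun x hx => ?_
    have hc1 : 0 < Real.cos x := Real.cos_pos_of_mem_Ioo ⟨hx.1, by linarith [hx.2]⟩
    have hc2 : 0 < Real.cos (x - θ) :=
      Real.cos_pos_of_mem_Ioo ⟨by linarith [hx.1], by linarith [hx.2]⟩
    simp [Real.sign_of_pos hc1, Real.sign_of_pos hc2]
  have e2 : (∫ φ in (θ + π/2)..(π/2),
      Real.sign (Real.cos φ) * Real.sign (Real.cos (φ - θ))) = (-1) * (π/2 - (θ + π/2)) := by
    refine my_integral_const_Ioo (by linarith) fun x hx => ?_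
    have hc1 : 0 < Real.cos x := Real.cos_pos_of_mem_Ioo ⟨by linarith [hx.1], hx.2⟩
    have hc2 : Real.cos (x - θ) < 0 :=
      Real.cos_neg_of_pi_div_two_lt_of_lt (by linarith [hx.1]) (by linarith [hx.2])
    simp [Real.sign_of_pos hc1, Real.sign_of_neg hc2]
  have e3 : (∫ φ in (π/2)..(θ + 3*π/2),
      Real.sign (Real.cos φ) * Real.sign (Real.cos (φ - θ))) = 1 * (θ + 3*π/2 - π/2) := by
    refine my_integral_const_Ioo (by linarith) fun x hx => ?_
    have hc1 : Real.cos x < 0 :=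
      Real.cos_neg_of_pi_div_two_lt_of_lt hx.1 (by linarith [hx.2])
    have hc2 : Real.cos (x - θ) < 0 :=
      Real.cos_neg_of_pi_div_two_lt_of_lt (by linarith [hx.1]) (by linarith [hx.2])
    simp [Real.sign_of_neg hc1, Real.sign_of_neg hc2]
  have e4 : (∫ φ in (θ + 3*π/2)..(-(π/2) + 2*π),
      Real.sign (Real.cos φ) * Real.sign (Real.cos (φ - θ))) =
      (-1) * (-(π/2) + 2*π - (θ + 3*π/2)) := by
    refine my_integral_const_Ioo (by linarith) fun x hx => ?_
    have hc1 : Real.cos x < 0 :=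
      Real.cos_neg_of_pi_div_two_lt_of_lt (by linarith [hx.1]) (by linarith [hx.2])
    have hc2 : 0 < Real.cos (x - θ) := by
      rw [← Real.cos_sub_two_pi]
      exact Real.cos_pos_of_mem_Ioo ⟨by linarith [hx.1], by linarith [hx.2]⟩
    simp [Real.sign_of_neg hc1, Real.sign_of_pos hc2]
  rw [e1, e2, e3, e4]; ring

lemma G_per (θ : ℝ) : G (θ + 2*π) = G θ := by
  rw [G, G]
  congr 1 with φ
  rw [show φ - (θ + 2*π) = (φ - θ) - 2*π by ring, Real.cos_sub_two_pi]

lemma my_arcsin_cos {θ : ℝ} (h1 : 0 ≤ θ) (h2 : θ ≤ π) : Real.arcsin (Real.cos θ) = π/2 - θ := by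
  rw [← Real.sin_pi_div_two_sub, Real.arcsin_sin (by linarith) (by linarith)]

lemma my_arcsin_cos' {θ : ℝ} (h1 : -π ≤ θ) (h2 : θ ≤ 0) :
    Real.arcsin (Real.cos θ) = π/2 + θ := by
  rw [← Real.cos_neg, my_arcsin_cos (by linarith) (by linarith)]
  ring

lemma keyG {θ : ℝ} (h1 : -(2*π) < θ) (h2 : θ < 2*π) : G θ = 4 * Real.arcsin (Real.cos θ) := by
  have hπ := Real.pi_pos
  rcases le_or_gt 0 θ with h0 | h0
  · rcases le_or_gt θ π with hp | hp
    · rw [keyG0 h0 hp, my_arcsin_cos h0 hp]; ring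
    · have h5 := G_per (θ - 2*π)
      rw [show θ - 2*π + 2*π = θ by ring] at h5
      rw [h5, keyG0neg (by linarith) (by linarith),
        show Real.cos θ = Real.cos (θ - 2*π) from (Real.cos_sub_two_pi θ).symm,
        my_arcsin_cos' (by linarith) (by linarith)]
      ring
  · rcases le_or_gt (-π) θ with hp | hp
    · rw [keyG0neg hp (le_of_lt h0), my_arcsin_cos' hp (le_of_lt h0)]; ring
    · rw [← G_per θ, keyG0 (by linarith) (by linarith),
        show Real.cos θ = Real.cos (θ + 2*π) from (Real.cos_add_two_pi θ).symm,
        my_arcsin_cos (by linarith) (by linarith)]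
      ring

lemma my_gauss_int (g : ℝ → ℝ) :
    ∫ x, g x ∂(gaussianReal 0 1) = ∫ x, gaussianPDFReal 0 1 x * g x := by
  rw [gaussianReal_of_var_ne_zero 0 one_ne_zero, gaussianPDF_def]
  rw [show (fun x => ENNReal.ofReal (gaussianPDFReal 0 1 x))
      = (fun x => ((fun y => (gaussianPDFReal 0 1 y).toNNReal) x : ℝ≥0∞)) from rfl]
  rw [integral_withDensity_eq_integral_smul (measurable_gaussianPDFReal 0 1).real_toNNReal g]
  congr 1
  ext x
  rw [NNReal.smul_def, Real.coe_toNNReal _ (gaussianPDFReal_nonneg 0 1 x)]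
  rfl

lemma my_pdf_eq (x : ℝ) :
    gaussianPDFReal 0 1 x = (Real.sqrt (2*π))⁻¹ * Real.exp (-(1/2) * x^2) := by
  simp only [gaussianPDFReal, NNReal.coe_one, mul_one, sub_zero]
  rw [show -x^2/2 = -(1/2)*x^2 by ring]

lemma my_pdf_prod (r φ : ℝ) :
    gaussianPDFReal 0 1 (r * Real.cos φ) * gaussianPDFReal 0 1 (r * Real.sin φ)
      = (2*π)⁻¹ * Real.exp (-(1/2) * r^2) := by
  have hs : Real.sqrt (2*π) * Real.sqrt (2*π) = 2*π :=
    Real.mul_self_sqrt (by positivity)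
  have hsq : (r * Real.cos φ)^2 + (r * Real.sin φ)^2 = r^2 := by
    have h := Real.sin_sq_add_cos_sq φ; nlinarith [h]
  rw [my_pdf_eq, my_pdf_eq,
    show ((√(2*π))⁻¹ * Real.exp (-(1/2)*(r*Real.cos φ)^2))
        * ((√(2*π))⁻¹ * Real.exp (-(1/2)*(r*Real.sin φ)^2))
      = (√(2*π) * √(2*π))⁻¹
        * (Real.exp (-(1/2)*(r*Real.cos φ)^2) * Real.exp (-(1/2)*(r*Real.sin φ)^2)) by
      rw [mul_inv]; ring,
    hs, ← Real.exp_add,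
    show -(1/2)*(r*Real.cos φ)^2 + -(1/2)*(r*Real.sin φ)^2
      = -(1/2)*((r*Real.cos φ)^2 + (r*Real.sin φ)^2) by ring, hsq]

theorem stmt_6 (a b : ℝ × ℝ)
    (ha : a.1 ^ 2 + a.2 ^ 2 = 1) (hb : b.1 ^ 2 + b.2 ^ 2 = 1) :
    ∫ u : ℝ × ℝ,
        Real.sign (a.1 * u.1 + a.2 * u.2) * Real.sign (b.1 * u.1 + b.2 * u.2)
        ∂((gaussianReal 0 1).prod (gaussianReal 0 1))
      = (2 / Real.pi) * Real.arcsin (a.1 * b.1 + a.2 * b.2) := by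
  have hπ := Real.pi_pos
  -- angles
  set zA : ℂ := ⟨a.1, a.2⟩ with hzA_def
  set zB : ℂ := ⟨b.1, b.2⟩ with hzB_def
  have hzA : ‖zA‖ = 1 := by
    rw [Complex.norm_def, Complex.normSq_mk, show a.1*a.1 + a.2*a.2 = 1 by nlinarith [ha]]
    exact Real.sqrt_one
  have hzB : ‖zB‖ = 1 := by
    rw [Complex.norm_def, Complex.normSq_mk, show b.1*b.1 + b.2*b.2 = 1 by nlinarith [hb]]
    exact Real.sqrt_one
  have hzA0 : zA ≠ 0 := by intro h; rw [h] at hzA; simp at hzA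
  have hzB0 : zB ≠ 0 := by intro h; rw [h] at hzB; simp at hzB
  set α := Complex.arg zA with hα_def
  set β := Complex.arg zB with hβ_def
  have hcosα : Real.cos α = a.1 := by rw [hα_def, Complex.cos_arg hzA0, hzA]; simp [hzA_def]
  have hsinα : Real.sin α = a.2 := by rw [hα_def, Complex.sin_arg, hzA]; simp [hzA_def]
  have hcosβ : Real.cos β = b.1 := by rw [hβ_def, Complex.cos_arg hzB0, hzB]; simp [hzB_def]
  have hsinβ : Real.sin β = b.2 := by rw [hβ_def, Complex.sin_arg, hzB]; simp [hzB_def]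
  have hαI : α ∈ Set.Ioc (-π) π := Complex.arg_mem_Ioc zA
  have hβI : β ∈ Set.Ioc (-π) π := Complex.arg_mem_Ioc zB
  set θ := β - α with hθ_def
  have hθ1 : -(2*π) < θ := by have := hαI.2; have := hβI.1; rw [hθ_def]; linarith
  have hθ2 : θ < 2*π := by have := hαI.1; have := hβI.2; rw [hθ_def]; linarith
  -- notation
  set p : ℝ → ℝ := gaussianPDFReal 0 1 with hp_def
  have hp_nonneg : ∀ x, 0 ≤ p x := gaussianPDFReal_nonneg 0 1
  have hp_meas : Measurable p := measurable_gaussianPDFReal 0 1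
  have hp_int : Integrable p := integrable_gaussianPDFReal 0 1
  set F : ℝ × ℝ → ℝ := fun u =>
    Real.sign (a.1 * u.1 + a.2 * u.2) * Real.sign (b.1 * u.1 + b.2 * u.2) with hF_def
  have hFmeas : Measurable F := by
    apply Measurable.mul
    · exact my_measurable_sign.comp ((measurable_fst.const_mul a.1).add
        (measurable_snd.const_mul a.2))
    · exact my_measurable_sign.comp ((measurable_fst.const_mul b.1).add
        (measurable_snd.const_mul b.2))
  have hFbd : ∀ u, |F u| ≤ 1 := by
    intro u
    rw [hF_def]
    simp only
    rw [abs_mul]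
    calc |Real.sign (a.1 * u.1 + a.2 * u.2)| * |Real.sign (b.1 * u.1 + b.2 * u.2)| ≤ 1 * 1 :=
          mul_le_mul (my_abs_sign_le _) (my_abs_sign_le _) (abs_nonneg _) zero_le_one
      _ = 1 := mul_one 1
  have hFint : Integrable F ((gaussianReal 0 1).prod (gaussianReal 0 1)) := by
    refine Integrable.mono' (integrable_const 1) hFmeas.aestronglyMeasurable
      (Filter.Eventually.of_forall fun u => ?_)
    simpa [Real.norm_eq_abs] using hFbd u
  set H : ℝ × ℝ → ℝ := fun u => p u.1 * (p u.2 * F u) with hH_def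
  have hHint : Integrable H (volume.prod volume) := by
    refine Integrable.mono' (hp_int.mul_prod hp_int)
      ((hp_meas.comp measurable_fst).mul
        ((hp_meas.comp measurable_snd).mul hFmeas)).aestronglyMeasurable
      (Filter.Eventually.of_forall fun u => ?_)
    rw [hH_def]
    simp only [Real.norm_eq_abs]
    rw [show p u.1 * (p u.2 * F u) = (p u.1 * p u.2) * F u by ring, abs_mul]
    calc |p u.1 * p u.2| * |F u| ≤ |p u.1 * p u.2| * 1 :=
          mul_le_mul_of_nonneg_left (hFbd u) (abs_nonneg _)
      _ = p u.1 * p u.2 := by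
          rw [mul_one, abs_of_nonneg (mul_nonneg (hp_nonneg _) (hp_nonneg _))]
  -- step 1: convert to Lebesgue with density
  have step1 : ∫ u, F u ∂((gaussianReal 0 1).prod (gaussianReal 0 1))
      = ∫ u : ℝ × ℝ, H u := by
    rw [MeasureTheory.integral_prod F hFint]
    have inner : ∀ x : ℝ, ∫ y, F (x, y) ∂(gaussianReal 0 1) = ∫ y, p y * F (x, y) :=
      fun x => my_gauss_int _
    calc ∫ x, (∫ y, F (x, y) ∂(gaussianReal 0 1)) ∂(gaussianReal 0 1)
        = ∫ x, (∫ y, p y * F (x, y)) ∂(gaussianReal 0 1) := by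
          congr 1; funext x; rw [inner x]
      _ = ∫ x, p x * ∫ y, p y * F (x, y) := my_gauss_int _
      _ = ∫ x, ∫ y, p x * (p y * F (x, y)) := by
          congr 1; funext x; rw [MeasureTheory.integral_const_mul]
      _ = ∫ u : ℝ × ℝ, H u ∂(volume.prod volume) := (MeasureTheory.integral_prod H hHint).symm
      _ = ∫ u : ℝ × ℝ, H u := by rw [← Measure.volume_eq_prod]
  -- step 2: polar coordinates
  have step2 : (∫ u : ℝ × ℝ, H u)
      = ∫ q in polarCoord.target, q.1 • H (polarCoord.symm q) :=
    (integral_comp_polarCoord_symm H).symm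
  have htarget : polarCoord.target = Set.Ioi (0:ℝ) ×ˢ Set.Ioo (-π) π := rfl
  have hmeas_target : MeasurableSet polarCoord.target := by
    rw [htarget]; exact measurableSet_Ioi.prod measurableSet_Ioo
  have hpoint : ∀ q ∈ polarCoord.target,
      q.1 • H (polarCoord.symm q)
        = (fun r => r * ((2*π)⁻¹ * Real.exp (-(1/2) * r^2))) q.1
          * (fun φ => Real.sign (Real.cos (φ - α)) * Real.sign (Real.cos (φ - β))) q.2 := by
    rintro ⟨r, φ⟩ hq
    rw [htarget] at hq
    obtain ⟨hr, hφ⟩ := hq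
    have hr' : (0:ℝ) < r := hr
    simp only [smul_eq_mul]
    have hsymm : polarCoord.symm (r, φ) = (r * Real.cos φ, r * Real.sin φ) := rfl
    rw [hH_def, hF_def, hsymm]
    simp only
    rw [show a.1 * (r * Real.cos φ) + a.2 * (r * Real.sin φ) = r * Real.cos (φ - α) by
        rw [Real.cos_sub, ← hcosα, ← hsinα]; ring,
      show b.1 * (r * Real.cos φ) + b.2 * (r * Real.sin φ) = r * Real.cos (φ - β) by
        rw [Real.cos_sub, ← hcosβ, ← hsinβ]; ring,
      my_sign_mul_pos hr', my_sign_mul_pos hr']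
    have hpp := my_pdf_prod r φ
    rw [hp_def]
    linear_combination
      (r * (Real.sign (Real.cos (φ - α)) * Real.sign (Real.cos (φ - β)))) * hpp
  have step3 : (∫ q in polarCoord.target, q.1 • H (polarCoord.symm q))
      = (∫ r in Set.Ioi (0:ℝ), r * ((2*π)⁻¹ * Real.exp (-(1/2) * r^2)))
        * ∫ φ in Set.Ioo (-π) π, Real.sign (Real.cos (φ - α)) * Real.sign (Real.cos (φ - β)) := by
    rw [setIntegral_congr_fun hmeas_target hpoint, htarget, Measure.volume_eq_prod]
    exact MeasureTheory.setIntegral_prod_mul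
      (fun r => r * ((2*π)⁻¹ * Real.exp (-(1/2) * r^2)))
      (fun φ => Real.sign (Real.cos (φ - α)) * Real.sign (Real.cos (φ - β)))
      (Set.Ioi 0) (Set.Ioo (-π) π)
  -- radial
  have hrad : (∫ r in Set.Ioi (0:ℝ), r * ((2*π)⁻¹ * Real.exp (-(1/2) * r^2))) = (2*π)⁻¹ := by
    rw [show (fun r : ℝ => r * ((2*π)⁻¹ * Real.exp (-(1/2) * r^2)))
        = fun r : ℝ => (2*π)⁻¹ * (r * Real.exp (-(1/2) * r^2)) from funext fun r => by ring,
      MeasureTheory.integral_const_mul]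
    rw [my_radial, mul_one]
  -- angular
  have hang : (∫ φ in Set.Ioo (-π) π,
      Real.sign (Real.cos (φ - α)) * Real.sign (Real.cos (φ - β))) = G θ := by
    rw [← MeasureTheory.integral_Ioc_eq_integral_Ioo,
      ← intervalIntegral.integral_of_le (by linarith : -π ≤ π)]
    have hEq : ∀ x ∈ Set.uIcc (-π) π,
        (fun φ => Real.sign (Real.cos (φ - α)) * Real.sign (Real.cos (φ - β))) x
          = (fun y => (fun ψ => Real.sign (Real.cos ψ) * Real.sign (Real.cos (ψ - θ))) (y - α))
            x := by
      intro x _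
      simp only
      rw [show x - α - θ = x - β by rw [hθ_def]; ring]
    have hcomp := intervalIntegral.integral_comp_sub_right (a := -π) (b := π)
      (fun ψ => Real.sign (Real.cos ψ) * Real.sign (Real.cos (ψ - θ))) α
    have hshift := (g_per θ).intervalIntegral_add_eq (-π - α) 0
    rw [zero_add] at hshift
    calc (∫ x in (-π)..π, Real.sign (Real.cos (x - α)) * Real.sign (Real.cos (x - β)))
        = ∫ x in (-π)..π,
            (fun ψ => Real.sign (Real.cos ψ) * Real.sign (Real.cos (ψ - θ))) (x - α) :=
          intervalIntegral.integral_congr hEq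
      _ = ∫ x in (-π - α)..(π - α),
            Real.sign (Real.cos x) * Real.sign (Real.cos (x - θ)) := hcomp
      _ = ∫ x in (0:ℝ)..(2*π), Real.sign (Real.cos x) * Real.sign (Real.cos (x - θ)) := by
          rw [show π - α = -π - α + 2*π by ring]
          exact hshift
      _ = G θ := rfl
  rw [show (∫ u : ℝ × ℝ,
        Real.sign (a.1 * u.1 + a.2 * u.2) * Real.sign (b.1 * u.1 + b.2 * u.2)
        ∂((gaussianReal 0 1).prod (gaussianReal 0 1)))
      = ∫ u, F u ∂((gaussianReal 0 1).prod (gaussianReal 0 1)) from rfl,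
    step1, step2, step3, hrad, hang, keyG hθ1 hθ2,
    show Real.cos θ = a.1 * b.1 + a.2 * b.2 by
      rw [hθ_def, Real.cos_sub, hcosβ, hsinβ, hcosα, hsinα]; ring]
  field_simp
  ring
end

section
/- Let t₁,…,t_{2k+1} be i.i.d. random vectors in {-1,1}^D whose coordinates are i.i.d. uniform on {-1,1}. Fix a coordinate and an index i. The probability that the sign of (∑ⱼ tⱼ) at that coordinate agrees with the sign of tᵢ at that coordinate equals (1 + (1/4^k)·C(2k,k))/2. -/
open Finset

private lemma filter_equiv_card {α β : Type*} [Fintype α] [Fintype β] (e : α ≃ β)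
    (p : β → Prop) [DecidablePred p] :
    (univ.filter (fun a => p (e a))).card = (univ.filter p).card := by
  apply Finset.card_nbij' e e.symm
  · intro a ha; simp only [Finset.mem_coe, mem_filter, mem_univ, true_and] at ha ⊢; simpa using ha
  · intro b hb; simp only [Finset.mem_coe, mem_filter, mem_univ, true_and] at hb ⊢; simpa using hb
  · intro a _; simp
  · intro b _; simp

private def splitEquiv (n D : ℕ) (c : Fin D) :
    (Fin n → Fin D → Bool) ≃ (Fin n → Bool) × (Fin n → {d : Fin D // d ≠ c} → Bool) where
  toFun t := (fun j => t j c, fun j d => t j d.1)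
  invFun x := fun j d => if h : d = c then x.1 j else x.2 j ⟨d, h⟩
  left_inv t := by funext j d; by_cases h : d = c <;> simp [h]
  right_inv x := by
    refine Prod.ext (funext fun j => ?_) (funext fun j => funext fun d => ?_)
    · simp
    · simp [d.2]

private lemma finset_count (k : ℕ) (i : Fin (2*k+1)) :
    (univ.filter (fun A : Finset (Fin (2*k+1)) =>
      (i ∈ A ∧ k+1 ≤ A.card) ∨ (i ∉ A ∧ A.card ≤ k))).card
    = 4^k + Nat.choose (2*k) k := by
  classical
  set E : Finset (Fin (2*k+1)) := univ.erase i with hEdef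
  have hiE : i ∉ E := Finset.notMem_erase i univ
  have hE : E.card = 2*k := by
    rw [hEdef, Finset.card_erase_of_mem (mem_univ i), Finset.card_univ]; simp
  -- split the filter into two disjoint parts
  have hsplit : (univ.filter (fun A : Finset (Fin (2*k+1)) =>
      (i ∈ A ∧ k+1 ≤ A.card) ∨ (i ∉ A ∧ A.card ≤ k))).card
      = (univ.filter (fun A : Finset (Fin (2*k+1)) => i ∈ A ∧ k+1 ≤ A.card)).card
      + (univ.filter (fun A : Finset (Fin (2*k+1)) => i ∉ A ∧ A.card ≤ k)).card := by
    rw [Finset.filter_or, Finset.card_union_of_disjoint]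
    rw [Finset.disjoint_filter]
    intro A _ h1 h2
    exact h2.1 h1.1
  -- second part equals first part via complement
  have hc2 : (univ.filter (fun A : Finset (Fin (2*k+1)) => i ∉ A ∧ A.card ≤ k)).card
      = (univ.filter (fun A : Finset (Fin (2*k+1)) => i ∈ A ∧ k+1 ≤ A.card)).card := by
    apply Finset.card_nbij' (fun A => Aᶜ) (fun A => Aᶜ)
    · intro A hA
      simp only [Finset.mem_coe, mem_filter, mem_univ, true_and, Finset.mem_compl] at hA ⊢
      have hcc : Aᶜ.card = (2*k+1) - A.card := by
        rw [Finset.card_compl]; simp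
      exact ⟨hA.1, by omega⟩
    · intro A hA
      simp only [Finset.mem_coe, mem_filter, mem_univ, true_and, Finset.mem_compl] at hA ⊢
      have hcc : Aᶜ.card = (2*k+1) - A.card := by
        rw [Finset.card_compl]; simp
      have hle : A.card ≤ 2*k+1 := by
        simpa using Finset.card_le_card (Finset.subset_univ A)
      exact ⟨by simp [hA.1], by omega⟩
    · intro A _; simp
    · intro A _; simp
  -- first part: bijection with subsets of E of card ≥ k
  have hc1 : (univ.filter (fun A : Finset (Fin (2*k+1)) => i ∈ A ∧ k+1 ≤ A.card)).card
      = (E.powerset.filter (fun B => k ≤ B.card)).card := by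
    apply Finset.card_nbij' (fun A => A.erase i) (fun B => insert i B)
    · intro A hA
      simp only [Finset.mem_coe, mem_filter, mem_univ, true_and, Finset.mem_powerset] at hA ⊢
      constructor
      · intro x hx
        simp only [Finset.mem_erase] at hx
        simp [hEdef, hx.1]
      · rw [Finset.card_erase_of_mem hA.1]; omega
    · intro B hB
      simp only [Finset.mem_coe, mem_filter, mem_univ, true_and, Finset.mem_powerset] at hB ⊢
      have hiB : i ∉ B := fun h => hiE (hB.1 h)
      rw [Finset.card_insert_of_notMem hiB]
      exact ⟨Finset.mem_insert_self i B, by omega⟩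
    · intro A hA
      simp only [Finset.mem_coe, mem_filter, mem_univ, true_and] at hA
      exact Finset.insert_erase hA.1
    · intro B hB
      simp only [Finset.mem_coe, mem_filter, mem_univ, true_and, Finset.mem_powerset] at hB
      exact Finset.erase_insert (fun h => hiE (hB.1 h))
  -- split ≥ k into = k and > k
  have hsplit2 : (E.powerset.filter (fun B => k ≤ B.card)).card
      = (E.powerset.filter (fun B => B.card = k)).card
      + (E.powerset.filter (fun B => k+1 ≤ B.card)).card := by
    have : E.powerset.filter (fun B => k ≤ B.card)
        = E.powerset.filter (fun B => B.card = k ∨ k+1 ≤ B.card) := by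
      apply Finset.filter_congr
      intro B _; constructor
      · intro h; omega
      · intro h; omega
    rw [this, Finset.filter_or, Finset.card_union_of_disjoint]
    rw [Finset.disjoint_filter]
    intro B _ h1 h2
    omega
  -- = k part
  have hb : (E.powerset.filter (fun B => B.card = k)).card = Nat.choose (2*k) k := by
    rw [← Finset.powersetCard_eq_filter, Finset.card_powersetCard, hE]
  -- > k part equals < k part via complement within E
  have ha : (E.powerset.filter (fun B => k+1 ≤ B.card)).card
      = (E.powerset.filter (fun B => B.card < k)).card := by
    apply Finset.card_nbij' (fun B => E \ B) (fun B => E \ B)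
    · intro B hB
      simp only [Finset.mem_coe, mem_filter, Finset.mem_powerset] at hB ⊢
      have h1 : (E \ B).card = E.card - B.card := Finset.card_sdiff_of_subset hB.1
      have h2 : B.card ≤ E.card := Finset.card_le_card hB.1
      exact ⟨Finset.sdiff_subset, by omega⟩
    · intro B hB
      simp only [Finset.mem_coe, mem_filter, Finset.mem_powerset] at hB ⊢
      have h1 : (E \ B).card = E.card - B.card := Finset.card_sdiff_of_subset hB.1
      exact ⟨Finset.sdiff_subset, by omega⟩
    · intro B hB
      simp only [Finset.mem_coe, mem_filter, Finset.mem_powerset] at hB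
      exact Finset.sdiff_sdiff_eq_self hB.1
    · intro B hB
      simp only [Finset.mem_coe, mem_filter, Finset.mem_powerset] at hB
      exact Finset.sdiff_sdiff_eq_self hB.1
  -- total
  have htot : (E.powerset.filter (fun B => B.card < k)).card
      + (E.powerset.filter (fun B => k ≤ B.card)).card = 4^k := by
    have := Finset.card_filter_add_card_filter_not
      (s := E.powerset) (p := fun B => B.card < k)
    rw [Finset.card_powerset, hE] at this
    have h4 : (2:ℕ)^(2*k) = 4^k := by rw [pow_mul]; norm_num
    have heq : E.powerset.filter (fun B => ¬ B.card < k)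
        = E.powerset.filter (fun B => k ≤ B.card) := by
      apply Finset.filter_congr; intro B _; omega
    rw [heq] at this
    omega
  omega

private lemma count_bool (k : ℕ) (i : Fin (2*k+1)) :
    (univ.filter (fun s : Fin (2*k+1) → Bool =>
      Int.sign (∑ j, (if s j then (1:ℤ) else -1)) = (if s i then (1:ℤ) else -1))).card
    = 4^k + Nat.choose (2*k) k := by
  classical
  have key : ∀ s : Fin (2*k+1) → Bool,
      (Int.sign (∑ j, (if s j then (1:ℤ) else -1)) = (if s i then (1:ℤ) else -1))
      ↔ ((s i = true ∧ k+1 ≤ (univ.filter (fun j => s j = true)).card)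
          ∨ (s i = false ∧ (univ.filter (fun j => s j = true)).card ≤ k)) := by
    intro s
    set T : ℕ := (univ.filter (fun j => s j = true)).card with hT
    have hTle : T ≤ 2*k+1 := by
      rw [hT]
      simpa using Finset.card_filter_le (univ : Finset (Fin (2*k+1))) (fun j => s j = true)
    have hsum : (∑ j, (if s j then (1:ℤ) else -1)) = 2 * T - (2*k+1) := by
      have h1 : ∀ j : Fin (2*k+1), (if s j then (1:ℤ) else -1)
          = 2 * (if s j = true then (1:ℤ) else 0) - 1 := by
        intro j; cases h : s j <;> simp [h]
      rw [Finset.sum_congr rfl (fun j _ => h1 j), Finset.sum_sub_distrib,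
        ← Finset.mul_sum, Finset.sum_boole]
      simp [hT, Finset.card_univ]
    rw [hsum]
    cases h : s i with
    | true =>
      simp only [h, if_true, reduceCtorEq, false_and, or_false, true_and]
      rw [Int.sign_eq_one_iff_pos]
      constructor <;> intro <;> omega
    | false =>
      simp only [h, if_false, reduceCtorEq, false_and, false_or, true_and]
      rw [show ((-1:ℤ)) = -1 from rfl, Int.sign_eq_neg_one_iff_neg]
      constructor <;> intro <;> omega
  rw [Finset.filter_congr (fun s _ => key s)]
  rw [← finset_count k i]
  apply Finset.card_nbij' (fun s => univ.filter (fun j => s j = true))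
    (fun A => fun j => decide (j ∈ A))
  · intro s hs
    simp only [Finset.mem_coe, mem_filter, mem_univ, true_and] at hs ⊢
    rcases hs with ⟨h1, h2⟩ | ⟨h1, h2⟩
    · exact Or.inl ⟨by simp [h1], h2⟩
    · exact Or.inr ⟨by simp [h1], h2⟩
  · intro A hA
    simp only [Finset.mem_coe, mem_filter, mem_univ, true_and] at hA ⊢
    have hfe : (univ.filter (fun j => decide (j ∈ A) = true)) = A := by
      ext x; simp
    rcases hA with ⟨h1, h2⟩ | ⟨h1, h2⟩
    · exact Or.inl ⟨by simp [h1], by rw [hfe]; exact h2⟩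
    · exact Or.inr ⟨by simp [h1], by rw [hfe]; exact h2⟩
  · intro s _
    funext j; simp
  · intro A _
    ext x; simp

theorem stmt_10 (k D : ℕ) (hD : 1 ≤ D) (c : Fin D) (i : Fin (2 * k + 1)) :
    ((Finset.univ.filter (fun t : Fin (2 * k + 1) → Fin D → Bool =>
        Int.sign (∑ j, (if t j c then (1 : ℤ) else -1)) = (if t i c then (1 : ℤ) else -1))).card
        : ℝ) / 2 ^ ((2 * k + 1) * D)
      = (1 + (Nat.choose (2 * k) k : ℝ) / 4 ^ k) / 2 := by
  classical
  obtain ⟨d, rfl⟩ : ∃ d, D = d + 1 := ⟨D - 1, by omega⟩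
  have h1 : (Finset.univ.filter (fun t : Fin (2 * k + 1) → Fin (d+1) → Bool =>
        Int.sign (∑ j, (if t j c then (1 : ℤ) else -1)) = (if t i c then (1 : ℤ) else -1))).card
      = (Finset.univ.filter (fun x : (Fin (2*k+1) → Bool) × (Fin (2*k+1) → {x : Fin (d+1) // x ≠ c} → Bool) =>
        Int.sign (∑ j, (if x.1 j then (1 : ℤ) else -1)) = (if x.1 i then (1 : ℤ) else -1))).card :=
    filter_equiv_card (splitEquiv (2*k+1) (d+1) c)
      (fun x : (Fin (2*k+1) → Bool) × (Fin (2*k+1) → {x : Fin (d+1) // x ≠ c} → Bool) =>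
        Int.sign (∑ j, (if x.1 j then (1 : ℤ) else -1)) = (if x.1 i then (1 : ℤ) else -1))
  have h2 : (Finset.univ.filter (fun x : (Fin (2*k+1) → Bool) × (Fin (2*k+1) → {x : Fin (d+1) // x ≠ c} → Bool) =>
        Int.sign (∑ j, (if x.1 j then (1 : ℤ) else -1)) = (if x.1 i then (1 : ℤ) else -1))).card
      = (Finset.univ.filter (fun s : Fin (2*k+1) → Bool =>
        Int.sign (∑ j, (if s j then (1 : ℤ) else -1)) = (if s i then (1 : ℤ) else -1))).card
        * Fintype.card (Fin (2*k+1) → {x : Fin (d+1) // x ≠ c} → Bool) := by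
    have hps : (Finset.univ.filter (fun x : (Fin (2*k+1) → Bool) × (Fin (2*k+1) → {x : Fin (d+1) // x ≠ c} → Bool) =>
        Int.sign (∑ j, (if x.1 j then (1 : ℤ) else -1)) = (if x.1 i then (1 : ℤ) else -1)))
        = (Finset.univ.filter (fun s : Fin (2*k+1) → Bool =>
          Int.sign (∑ j, (if s j then (1 : ℤ) else -1)) = (if s i then (1 : ℤ) else -1)))
          ×ˢ (Finset.univ : Finset (Fin (2*k+1) → {x : Fin (d+1) // x ≠ c} → Bool)) := by
      ext x
      simp [Finset.mem_product]
    rw [hps, Finset.card_product, Finset.card_univ]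
  have hB : Fintype.card (Fin (2*k+1) → {x : Fin (d+1) // x ≠ c} → Bool) = 2 ^ ((2*k+1) * d) := by
    have hsub : Fintype.card {x : Fin (d+1) // x ≠ c} = d := by
      have h := Fintype.card_subtype_compl (p := fun x : Fin (d+1) => x = c)
      rw [Fintype.card_subtype_eq] at h
      simpa using h
    rw [Fintype.card_fun, Fintype.card_fun, hsub]
    simp only [Fintype.card_bool, Fintype.card_fin, ← pow_mul]
    ring_nf
  rw [h1, h2, hB, count_bool k i]
  have hpow : ((2:ℝ)) ^ ((2 * k + 1) * (d + 1)) = 2 ^ (2*k+1) * 2 ^ ((2*k+1)*d) := by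
    rw [← pow_add]; ring_nf
  push_cast
  rw [hpow]
  have h4 : (4:ℝ)^k = 2^(2*k) := by rw [pow_mul]; norm_num
  have hne1 : ((2:ℝ)) ^ ((2*k+1)*d) ≠ 0 := by positivity
  have hne2 : ((2:ℝ)) ^ (2*k+1) ≠ 0 := by positivity
  have hne3 : ((4:ℝ))^k ≠ 0 := by positivity
  field_simp
  rw [h4]
  ring
end
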